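/- For an integer ℓ ≥ 2, pairwise distinct reals L_2,...,L_ℓ in (0,2)∪(0,ℓ) with no L_i an integer, and t ≥ 0, the identity sum_{n=ℓ}^{∞} (1-e^{-t})^n (-1)^ℓ (1/n!) (prod_{i=2}^ℓ L_i) sum_{i=2}^{ℓ} [ Γ(n-L_i)/Γ(2-L_i) prod_{j≠i} 1/(L_i-L_j) ] = 1 + (-1)^ℓ sum_{i=1}^{ℓ} e^{-L_i t} prod_{j in {1,...,ℓ}\{i}} L_j/(L_i - L_j), where L_1 = 1 and L_1 is distinct from L_2,...,L_ℓ. -/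

import Mathlib

open Real Finset Polynomial


noncomputable def bc (L : ℝ) (n : ℕ) : ℝ :=
  (-1)^n * (∏ k ∈ Finset.range n, (L - k)) / n.factorial

lemma bc_zero (L : ℝ) : bc L 0 = 1 := by simp [bc]

lemma bc_one (L : ℝ) : bc L 1 = -L := by simp [bc]

lemma bc_succ (L : ℝ) (n : ℕ) : bc L (n+1) = bc L n * (((n : ℝ) - L)/((n : ℝ)+1)) := by
  have h1 : (n.factorial:ℝ) ≠ 0 := Nat.cast_ne_zero.2 n.factorial_ne_zero
  have h2 : (n:ℝ)+1 ≠ 0 := by positivity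
  unfold bc
  rw [Finset.prod_range_succ, pow_succ, Nat.factorial_succ]
  push_cast
  field_simp
  ring

lemma bc_ne_zero {L : ℝ} (hL : ∀ m : ℤ, L ≠ m) (n : ℕ) : bc L n ≠ 0 := by
  unfold bc
  apply div_ne_zero
  · refine mul_ne_zero (pow_ne_zero _ (by norm_num)) (Finset.prod_ne_zero_iff.2 ?_)
    intro k _
    refine sub_ne_zero.2 ?_
    have := hL k
    simpa using this
  · exact Nat.cast_ne_zero.2 n.factorial_ne_zero

lemma bc_eq_prod {L : ℝ} {n : ℕ} (hn : 2 ≤ n) :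
    bc L n = L * (L - 1) * (∏ k ∈ Finset.Ico 2 n, ((k:ℝ) - L)) / n.factorial := by
  unfold bc
  have hsplit : (∏ k ∈ Finset.range 2, (L - (k:ℝ))) * ∏ k ∈ Finset.Ico 2 n, (L - (k:ℝ))
      = ∏ k ∈ Finset.range n, (L - (k:ℝ)) := Finset.prod_range_mul_prod_Ico _ hn
  rw [← hsplit]
  have h2 : (∏ k ∈ Finset.range 2, (L - (k:ℝ))) = L * (L - 1) := by
    simp [Finset.prod_range_succ]
  rw [h2]
  have hneg : (∏ k ∈ Finset.Ico 2 n, (L - (k:ℝ)))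
      = (-1)^(n - 2) * ∏ k ∈ Finset.Ico 2 n, ((k:ℝ) - L) := by
    rw [← Nat.card_Ico 2 n]
    rw [← Finset.prod_const (-1 : ℝ), ← Finset.prod_mul_distrib]
    exact Finset.prod_congr rfl fun k _ => by ring
  rw [hneg]
  have hpow : (-1:ℝ)^n * (-1:ℝ)^(n-2) = 1 := by
    rw [← pow_add]
    refine Even.neg_one_pow ⟨n - 1, by omega⟩
  linear_combination (L * (L - 1) * (∏ k ∈ Finset.Ico 2 n, ((k:ℝ) - L)) / n.factorial) * hpow

lemma bc_deriv_bound_summable {L : ℝ} (hL : ∀ m : ℤ, L ≠ m) {r : ℝ} (hr0 : 0 < r) (hr1 : r < 1) :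
    Summable (fun n : ℕ => (n:ℝ) * |bc L n| * r^(n-1)) := by
  set r' : ℝ := (1+r)/2 with hr'
  have hrr' : r < r' := by rw [hr']; linarith
  have hr'1 : r' < 1 := by rw [hr']; linarith
  apply summable_of_ratio_norm_eventually_le hr'1
  set N : ℕ := max 1 ⌈|L| * r / (r' - r)⌉₊ with hN
  filter_upwards [Filter.eventually_ge_atTop N] with n hn
  have hn1 : 1 ≤ n := le_trans (le_max_left _ _) hn
  have hnN : (|L| * r / (r' - r)) ≤ n := by
    calc (|L| * r / (r' - r)) ≤ (⌈|L| * r / (r' - r)⌉₊ : ℝ) := Nat.le_ceil _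
    _ ≤ (N:ℝ) := by exact_mod_cast Nat.cast_le.2 (le_max_right _ _)
    _ ≤ (n:ℝ) := by exact_mod_cast hn
  have hkey : |(n:ℝ) - L| * r ≤ r' * n := by
    have h1 : |(n:ℝ) - L| ≤ (n:ℝ) + |L| := by
      calc |(n:ℝ) - L| ≤ |(n:ℝ)| + |L| := abs_sub _ _
      _ = (n:ℝ) + |L| := by rw [abs_of_nonneg (by positivity)]
    have h2 : |L| * r ≤ (r' - r) * n := by
      rw [div_le_iff₀ (by linarith)] at hnN
      linarith [hnN]
    nlinarith [hr0.le, (by positivity : (0:ℝ) ≤ (n:ℝ))]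
  have habs : |bc L (n+1)| = |bc L n| * (|(n:ℝ) - L| / ((n:ℝ)+1)) := by
    rw [bc_succ, abs_mul, abs_div, abs_of_nonneg (by positivity : (0:ℝ) ≤ (n:ℝ)+1)]
  have hrpow : r ^ ((n+1) - 1) = r ^ (n-1) * r := by
    have : (n+1) - 1 = (n-1) + 1 := by omega
    rw [this, pow_succ]
  have hne : (0:ℝ) < (n:ℝ) + 1 := by positivity
  have e1 : ‖(((n:ℕ)+1:ℕ):ℝ) * |bc L (n+1)| * r^((n+1)-1)‖
      = (|bc L n| * r^(n-1)) * (|(n:ℝ) - L| * r) := by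
    rw [Real.norm_eq_abs, abs_of_nonneg (by positivity), habs, hrpow]
    push_cast
    field_simp
  have e2 : ‖(n:ℝ) * |bc L n| * r^(n-1)‖ = (n:ℝ) * |bc L n| * r^(n-1) := by
    rw [Real.norm_eq_abs, abs_of_nonneg (by positivity)]
  rw [e1, e2]
  calc (|bc L n| * r^(n-1)) * (|(n:ℝ) - L| * r)
      ≤ (|bc L n| * r^(n-1)) * (r' * n) :=
        mul_le_mul_of_nonneg_left hkey (by positivity)
    _ = r' * ((n:ℝ) * |bc L n| * r^(n-1)) := by ring

lemma binom_summable_and_deriv {L : ℝ} (hL : ∀ m : ℤ, L ≠ m) {y : ℝ} (hy : |y| < 1) :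
    Summable (fun n : ℕ => bc L n * y ^ n) ∧
    Summable (fun n : ℕ => bc L n * ((n:ℝ) * y ^ (n-1))) ∧
    HasDerivAt (fun z => ∑' n : ℕ, bc L n * z ^ n)
      (∑' n : ℕ, bc L n * ((n:ℝ) * y ^ (n-1))) y := by
  set r : ℝ := (|y| + 1)/2 with hr
  have hyr : |y| < r := by rw [hr]; linarith
  have hr0 : 0 < r := by rw [hr]; positivity
  have hr1 : r < 1 := by rw [hr]; linarith
  have hu : Summable (fun n : ℕ => (n:ℝ) * |bc L n| * r^(n-1)) :=
    bc_deriv_bound_summable hL hr0 hr1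
  have hopen : IsOpen (Set.Ioo (-r) r) := isOpen_Ioo
  have hconn : IsPreconnected (Set.Ioo (-r) r) := isPreconnected_Ioo
  have hg : ∀ (n : ℕ) (z : ℝ), z ∈ Set.Ioo (-r) r →
      HasDerivAt (fun w => bc L n * w ^ n) (bc L n * ((n:ℝ) * z ^ (n-1))) z :=
    fun n z _ => (hasDerivAt_pow n z).const_mul (bc L n)
  have hbound : ∀ (n : ℕ) (z : ℝ), z ∈ Set.Ioo (-r) r →
      ‖bc L n * ((n:ℝ) * z ^ (n-1))‖ ≤ (n:ℝ) * |bc L n| * r^(n-1) := by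
    intro n z hz
    have hzr : |z| ≤ r := by
      rw [abs_le]; exact ⟨hz.1.le, hz.2.le⟩
    rw [Real.norm_eq_abs, abs_mul, abs_mul]
    rw [abs_of_nonneg (by positivity : (0:ℝ) ≤ (n:ℝ)), abs_pow]
    calc |bc L n| * ((n:ℝ) * |z|^(n-1)) ≤ |bc L n| * ((n:ℝ) * r^(n-1)) := by
          refine mul_le_mul_of_nonneg_left ?_ (abs_nonneg _)
          exact mul_le_mul_of_nonneg_left (pow_le_pow_left₀ (abs_nonneg _) hzr _) (by positivity)
      _ = (n:ℝ) * |bc L n| * r^(n-1) := by ring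
  have h0mem : (0:ℝ) ∈ Set.Ioo (-r) r := by constructor <;> simp [hr0] <;> linarith
  have h0sum : Summable (fun n : ℕ => bc L n * (0:ℝ) ^ n) := by
    apply summable_of_ne_finset_zero (s := {0})
    intro n hn
    have : n ≠ 0 := by simpa using hn
    simp [zero_pow this]
  have hymem : y ∈ Set.Ioo (-r) r := by rw [Set.mem_Ioo, ← abs_lt]; exact hyr
  have hderiv : HasDerivAt (fun z => ∑' n : ℕ, bc L n * z ^ n)
      (∑' n : ℕ, bc L n * ((n:ℝ) * y ^ (n-1))) y :=
    hasDerivAt_tsum_of_isPreconnected hu hopen hconn hg hbound h0mem h0sum hymem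
  have hSd : Summable (fun n : ℕ => bc L n * ((n:ℝ) * y ^ (n-1))) :=
    Summable.of_norm_bounded hu (fun n => hbound n y hymem)
  have hSf : Summable (fun n : ℕ => bc L n * y ^ n) := by
    apply Summable.of_norm_bounded_eventually_nat (g := fun n : ℕ => (n:ℝ) * |bc L n| * r^(n-1)) hu
    filter_upwards [Filter.eventually_ge_atTop 1] with n hn
    rw [Real.norm_eq_abs, abs_mul, abs_pow]
    have h1 : |y|^n ≤ r^(n-1) := by
      calc |y|^n ≤ r^n := pow_le_pow_left₀ (abs_nonneg _) hyr.le _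
        _ ≤ r^(n-1) := pow_le_pow_of_le_one hr0.le hr1.le (by omega)
    calc |bc L n| * |y|^n ≤ |bc L n| * r^(n-1) :=
          mul_le_mul_of_nonneg_left h1 (abs_nonneg _)
      _ ≤ (n:ℝ) * (|bc L n| * r^(n-1)) :=
          le_mul_of_one_le_left (mul_nonneg (abs_nonneg _) (pow_nonneg hr0.le _))
            (by exact_mod_cast hn)
      _ = (n:ℝ) * |bc L n| * r^(n-1) := by ring
  exact ⟨hSf, hSd, hderiv⟩

lemma binom_ode {L : ℝ} (hL : ∀ m : ℤ, L ≠ m) {y : ℝ} (hy : |y| < 1) :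
    (1 - y) * (∑' n : ℕ, bc L n * ((n:ℝ) * y ^ (n-1)))
      = -L * ∑' n : ℕ, bc L n * y ^ n := by
  obtain ⟨hSf, hSd, -⟩ := binom_summable_and_deriv hL hy
  have hshift : Summable (fun n : ℕ => bc L (n+1) * (((n:ℕ)+1:ℝ) * y ^ n)) := by
    have := (summable_nat_add_iff 1).2 hSd
    refine this.congr fun n => ?_
    simp
  have hA : Summable (fun n : ℕ => bc L n * ((n:ℝ) - L) * y ^ n) := by
    refine hshift.congr fun n => ?_
    have hne : ((n:ℝ)+1) ≠ 0 := by positivity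
    rw [bc_succ]
    field_simp
  have hB : Summable (fun n : ℕ => bc L n * (n:ℝ) * y ^ n) := by
    refine (hSd.mul_left y).congr fun n => ?_
    cases n with
    | zero => simp
    | succ k =>
      have : (k+1) - 1 = k := by omega
      rw [this]
      push_cast
      ring
  have hD1 : (∑' n : ℕ, bc L n * ((n:ℝ) * y ^ (n-1)))
      = ∑' n : ℕ, bc L n * ((n:ℝ) - L) * y ^ n := by
    rw [hSd.tsum_eq_zero_add]
    simp only [Nat.cast_zero, zero_mul, mul_zero, zero_add]
    refine tsum_congr fun n => ?_
    have h1 : (n+1) - 1 = n := by omega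
    rw [h1, bc_succ]
    have hne : ((n:ℝ)+1) ≠ 0 := by positivity
    push_cast
    field_simp
  have hD2 : y * (∑' n : ℕ, bc L n * ((n:ℝ) * y ^ (n-1)))
      = ∑' n : ℕ, bc L n * (n:ℝ) * y ^ n := by
    rw [← tsum_mul_left]
    refine tsum_congr fun n => ?_
    cases n with
    | zero => simp
    | succ k =>
      have : (k+1) - 1 = k := by omega
      rw [this]
      push_cast
      ring
  have expand : (1 - y) * (∑' n : ℕ, bc L n * ((n:ℝ) * y ^ (n-1)))
      = (∑' n : ℕ, bc L n * ((n:ℝ) - L) * y ^ n) - ∑' n : ℕ, bc L n * (n:ℝ) * y ^ n := by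
    rw [sub_mul, one_mul, hD2]
    rw [hD1]
  rw [expand, ← hA.tsum_sub hB]
  rw [← tsum_mul_left]
  refine tsum_congr fun n => ?_
  ring

lemma binom_eq_rpow {L : ℝ} (hL : ∀ m : ℤ, L ≠ m) {x : ℝ} (h0 : 0 ≤ x) (h1 : x < 1) :
    (∑' n : ℕ, bc L n * x ^ n) = (1 - x) ^ L := by
  set f : ℝ → ℝ := fun z => ∑' n : ℕ, bc L n * z ^ n with hf
  set g : ℝ → ℝ := fun z => f z * (1 - z) ^ (-L) with hg
  have hgderiv : ∀ y ∈ Set.Ioo (-1:ℝ) 1, HasDerivAt g 0 y := by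
    intro y hy
    have hyabs : |y| < 1 := by rw [abs_lt]; exact ⟨hy.1, hy.2⟩
    obtain ⟨hSf, hSd, hderiv⟩ := binom_summable_and_deriv hL hyabs
    have hpos : (0:ℝ) < 1 - y := by linarith [hy.2]
    have h2a : HasDerivAt (fun z : ℝ => 1 - z) (-1) y := by
      simpa using (hasDerivAt_id y).const_sub 1
    have h2b : HasDerivAt (fun w : ℝ => w ^ (-L)) (-L * (1-y)^(-L-1)) (1-y) :=
      Real.hasDerivAt_rpow_const (Or.inl hpos.ne')
    have h2 : HasDerivAt (fun z : ℝ => (1 - z) ^ (-L)) (L * (1-y)^(-L-1)) y := by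
      have := h2b.comp y h2a
      convert this using 1
      all_goals first | rfl | ring
    have hmul := hderiv.mul h2
    have hzero : (∑' n : ℕ, bc L n * ((n:ℝ) * y ^ (n-1))) * (1-y)^(-L)
        + f y * (L * (1-y)^(-L-1)) = 0 := by
      have hrp : (1-y)^(-L) = (1-y)^(-L-1) * (1-y) := by
        nth_rewrite 3 [← Real.rpow_one (1-y)]
        rw [← Real.rpow_add hpos]
        norm_num
      rw [hrp]
      have hode := binom_ode hL hyabs
      have : (∑' n : ℕ, bc L n * ((n:ℝ) * y ^ (n-1))) * ((1-y)^(-L-1) * (1-y))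
          + f y * (L * (1-y)^(-L-1))
          = (1-y)^(-L-1) * ((1 - y) * (∑' n : ℕ, bc L n * ((n:ℝ) * y ^ (n-1))) + L * f y) := by
        ring
      rw [this, hode]
      ring
    rw [hzero] at hmul
    exact hmul
  have hsub : Set.Icc (0:ℝ) x ⊆ Set.Ioo (-1:ℝ) 1 := by
    intro z hz
    constructor <;> [linarith [hz.1]; linarith [hz.2, h1]]
  have hconst : g x = g 0 := by
    refine constant_of_has_deriv_right_zero (a := 0) (b := x) (fun z hz => ?_)
      (fun z hz => ?_) x ⟨h0, le_refl x⟩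
    · exact ((hgderiv z (hsub hz)).continuousAt).continuousWithinAt
    · exact ((hgderiv z (hsub (Set.mem_Icc_of_Ico hz))).hasDerivWithinAt)
  have hg0 : g 0 = 1 := by
    rw [hg]
    simp only
    have hf0 : f 0 = 1 := by
      rw [hf]
      simp only
      rw [tsum_eq_single 0 (fun n hn => by simp [zero_pow hn])]
      simp [bc_zero]
    rw [hf0]
    norm_num
  have hpos : (0:ℝ) < 1 - x := by linarith
  have : f x * (1-x)^(-L) = 1 := by
    have h2 := hconst.trans hg0
    simpa [hg] using h2
  have hrp : (1-x)^(-L) = ((1-x)^L)⁻¹ := Real.rpow_neg hpos.le L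
  rw [hrp] at this
  have hne : (1-x)^L ≠ 0 := (Real.rpow_pos_of_pos hpos L).ne'
  field_simp at this
  exact this

lemma binom_hasSum {L : ℝ} (hL : ∀ m : ℤ, L ≠ m) {x : ℝ} (h0 : 0 ≤ x) (h1 : x < 1) :
    HasSum (fun n : ℕ => bc L n * x ^ n) ((1 - x) ^ L) := by
  have habs : |x| < 1 := by rw [abs_lt]; constructor <;> linarith
  obtain ⟨hSf, -, -⟩ := binom_summable_and_deriv hL habs
  rw [hSf.hasSum_iff]
  exact binom_eq_rpow hL h0 h1

lemma gamma_prod {L : ℝ} (hL : ∀ m : ℤ, L ≠ m) :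
    ∀ n : ℕ, 2 ≤ n →
      Real.Gamma ((n:ℝ) - L) = Real.Gamma (2 - L) * ∏ k ∈ Finset.Ico 2 n, ((k:ℝ) - L) := by
  intro n
  induction n with
  | zero => omega
  | succ n ih =>
    intro hn
    rcases Nat.lt_or_ge n 2 with h | h
    · interval_cases n
      · omega
      · norm_num
    · have hne : (n:ℝ) - L ≠ 0 := by
        refine sub_ne_zero.2 fun h => ?_; exact hL n (by push_cast; linarith)
      have : ((n:ℕ):ℝ) + 1 - L = ((n:ℝ) - L) + 1 := by ring
      push_cast
      rw [this, Real.Gamma_add_one hne, ih h, Finset.prod_Ico_succ_top h]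
      ring

lemma lag_eval {ι : Type*} [DecidableEq ι] {s : Finset ι} {v : ι → ℝ}
    (hvs : Set.InjOn v s) (p : Polynomial ℝ) (hp : p.degree < s.card) (z : ℝ) :
    p.eval z = ∑ i ∈ s, p.eval (v i) * ∏ j ∈ s.erase i, ((z - v j)/(v i - v j)) := by
  conv_lhs => rw [Lagrange.eq_interpolate hvs hp]
  rw [Lagrange.interpolate_apply, Polynomial.eval_finset_sum]
  refine Finset.sum_congr rfl fun i hi => ?_
  rw [Polynomial.eval_mul, Polynomial.eval_C, Lagrange.basis, Polynomial.eval_prod]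
  congr 1
  refine Finset.prod_congr rfl fun j hj => ?_
  rw [Lagrange.basisDivisor, Polynomial.eval_mul, Polynomial.eval_C, Polynomial.eval_sub,
    Polynomial.eval_X, Polynomial.eval_C]
  rw [div_eq_inv_mul]

lemma lag_coeff {ι : Type*} [DecidableEq ι] {s : Finset ι} {v : ι → ℝ}
    (hvs : Set.InjOn v s) (p : Polynomial ℝ) (hp : p.degree < s.card) :
    p.coeff (s.card - 1) = ∑ i ∈ s, p.eval (v i) * ∏ j ∈ s.erase i, (v i - v j)⁻¹ := by
  conv_lhs => rw [Lagrange.eq_interpolate hvs hp]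
  rw [Lagrange.interpolate_apply, Polynomial.finset_sum_coeff]
  refine Finset.sum_congr rfl fun i hi => ?_
  have hbasis : Lagrange.basis s v i
      = Polynomial.C (∏ j ∈ s.erase i, (v i - v j)⁻¹) * Lagrange.nodal (s.erase i) v := by
    rw [Lagrange.basis, Lagrange.nodal_eq, map_prod, ← Finset.prod_mul_distrib]
    exact Finset.prod_congr rfl fun j hj => by rw [Lagrange.basisDivisor]
  rw [hbasis, Polynomial.coeff_C_mul, Polynomial.coeff_C_mul]
  have hcard : (s.erase i).card = s.card - 1 := Finset.card_erase_of_mem hi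
  have hmono : (Lagrange.nodal (s.erase i) v).Monic := Lagrange.nodal_monic
  have hdeg : (Lagrange.nodal (s.erase i) v).natDegree = s.card - 1 := by
    rw [Lagrange.natDegree_nodal, hcard]
  rw [← hdeg, hmono.coeff_natDegree]
  ring

lemma gamma2_ne_zero {L : ℝ} (hL : ∀ m : ℤ, L ≠ m) : Real.Gamma (2 - L) ≠ 0 := by
  apply Real.Gamma_ne_zero
  intro m h
  exact hL (2 + m) (by push_cast; linarith)

lemma bc_eq_gamma {L : ℝ} (hL : ∀ m : ℤ, L ≠ m) {n : ℕ} (hn : 2 ≤ n) :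
    bc L n = L * (L - 1) * (Real.Gamma ((n:ℝ) - L) / (Real.Gamma (2 - L) * n.factorial)) := by
  have hΓ := gamma2_ne_zero hL
  have hfac : (n.factorial : ℝ) ≠ 0 := Nat.cast_ne_zero.2 n.factorial_ne_zero
  rw [gamma_prod hL n hn, bc_eq_prod hn]
  field_simp

lemma alg1 (xp s P Ci G G2 fac Li : ℝ) (h0 : Li ≠ 0) (h1 : Li - 1 ≠ 0)
    (hG2 : G2 ≠ 0) (hfac : fac ≠ 0) :
    xp * s * fac⁻¹ * P * (G / G2 * Ci)
      = (s * P * Ci / (Li * (Li - 1))) * ((Li * (Li - 1) * (G / (G2 * fac))) * xp) := by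
  field_simp

lemma alg2 (s sn pe Ci P Li fac xn : ℝ) (h0 : Li ≠ 0) (h1 : Li - 1 ≠ 0) (hfac : fac ≠ 0) :
    (s * P * Ci / (Li * (Li - 1))) * ((Li * (Li - 1) * (sn * pe) / fac) * xn)
      = (s * P * xn * sn / fac) * (pe * Ci) := by
  field_simp

lemma alg3 (s P Ci Li : ℝ) (h0 : Li ≠ 0) (h1 : Li - 1 ≠ 0) :
    s * P * Ci / (Li * (Li - 1)) = s * (1 / (Li - 1) * (P / Li * Ci)) := by
  field_simp


set_option maxHeartbeats 1000000 in
/-- Equivalence of the geometric-time-changed Mecke jump probabilities and the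
hypoexponential (STIT) CDF, with `Λ([W]) = 1`.  Here `L 1 = 1` and
`L_2, ..., L_ℓ` are pairwise distinct reals in `(0, ℓ)`, none an integer, all
distinct from `1`; `t ≥ 0`.  Then
`∑_{n=ℓ}^∞ (1-e^{-t})^n (-1)^ℓ (1/n!) (∏_{i=2}^ℓ L_i)
    ∑_{i=2}^ℓ Γ(n-L_i)/Γ(2-L_i) ∏_{j≠i} 1/(L_i-L_j)
  = 1 + (-1)^ℓ ∑_{i=1}^ℓ e^{-L_i t} ∏_{j ∈ {1,...,ℓ}\{i}} L_j/(L_i-L_j)`.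
(The sum on the left runs over `m = n - ℓ ≥ 0`.) -/
theorem mecke_stit_jump_equivalence (ℓ : ℕ) (hℓ : 2 ≤ ℓ) (L : ℕ → ℝ)
    (hL1 : L 1 = 1)
    (hinj : Set.InjOn L (Finset.Icc 1 ℓ : Finset ℕ))
    (hrange : ∀ i ∈ Finset.Icc 2 ℓ, 0 < L i ∧ L i < ℓ)
    (hint : ∀ i ∈ Finset.Icc 2 ℓ, ∀ m : ℤ, L i ≠ m)
    (t : ℝ) (ht : 0 ≤ t) :
    ∑' m : ℕ,
        (1 - exp (-t)) ^ (m + ℓ) * (-1 : ℝ) ^ ℓ * (1 / ((m + ℓ).factorial : ℝ)) *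
          (∏ i ∈ Finset.Icc 2 ℓ, L i) *
          ∑ i ∈ Finset.Icc 2 ℓ,
            Gamma (((m : ℝ) + ℓ) - L i) / Gamma (2 - L i) *
              ∏ j ∈ (Finset.Icc 2 ℓ).erase i, 1 / (L i - L j)
      = 1 + (-1 : ℝ) ^ ℓ *
          ∑ i ∈ Finset.Icc 1 ℓ, exp (-(L i) * t) *
            ∏ j ∈ (Finset.Icc 1 ℓ).erase i, L j / (L i - L j) := by
  classical
  obtain ⟨x, hxdef⟩ : ∃ x : ℝ, x = 1 - Real.exp (-t) := ⟨_, rfl⟩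
  rw [← hxdef]
  have hxe : 1 - x = Real.exp (-t) := by rw [hxdef]; ring
  have hx0 : 0 ≤ x := by
    have h := Real.exp_le_one_iff.2 (by linarith : -t ≤ 0)
    rw [hxdef]; linarith
  have hx1 : x < 1 := by
    have h := Real.exp_pos (-t)
    rw [hxdef]; linarith
  -- basic sets
  have hsub21 : (Finset.Icc 2 ℓ : Finset ℕ) ⊆ Finset.Icc 1 ℓ := by
    intro j hj; simp only [Finset.mem_Icc] at *; omega
  have hinj2 : Set.InjOn L (Finset.Icc 2 ℓ : Finset ℕ) :=
    hinj.mono (by intro j hj; exact_mod_cast hsub21 (by exact_mod_cast hj))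
  have h1notin : (1:ℕ) ∉ Finset.Icc 2 ℓ := by simp
  have hins : Finset.Icc 1 ℓ = insert 1 (Finset.Icc 2 ℓ) := by
    ext j; simp only [Finset.mem_Icc, Finset.mem_insert]; omega
  have hcard1 : (Finset.Icc 1 ℓ).card = ℓ := by rw [Nat.card_Icc]; omega
  have hcard2 : (Finset.Icc 2 ℓ).card = ℓ - 1 := by rw [Nat.card_Icc]; omega
  -- abbreviations (opaque)
  obtain ⟨P, hPdef⟩ : ∃ P : ℝ, P = ∏ i ∈ Finset.Icc 2 ℓ, L i := ⟨_, rfl⟩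
  rw [← hPdef]
  obtain ⟨Ci, hCidef⟩ : ∃ Ci : ℕ → ℝ,
      Ci = fun i => ∏ j ∈ (Finset.Icc 2 ℓ).erase i, (L i - L j)⁻¹ := ⟨_, rfl⟩
  have hCi : ∀ i, Ci i = ∏ j ∈ (Finset.Icc 2 ℓ).erase i, (L i - L j)⁻¹ := by
    intro i; rw [hCidef]
  obtain ⟨K, hKdef⟩ : ∃ K : ℕ → ℝ,
      K = fun i => (-1:ℝ)^ℓ * P * Ci i / (L i * (L i - 1)) := ⟨_, rfl⟩
  have hK : ∀ i, K i = (-1:ℝ)^ℓ * P * Ci i / (L i * (L i - 1)) := by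
    intro i; rw [hKdef]
  obtain ⟨E, hEdef⟩ : ∃ E : ℕ → ℝ, E = fun i => Real.exp (-(L i * t)) := ⟨_, rfl⟩
  have hE : ∀ i, E i = Real.exp (-(L i * t)) := by intro i; rw [hEdef]
  obtain ⟨Pf, hPfdef⟩ : ∃ Pf : ℕ → ℝ,
      Pf = fun i => ∏ j ∈ (Finset.Icc 1 ℓ).erase i, (L j / (L i - L j)) := ⟨_, rfl⟩
  have hPff : ∀ i, Pf i = ∏ j ∈ (Finset.Icc 1 ℓ).erase i, (L j / (L i - L j)) := by
    intro i; rw [hPfdef]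
  obtain ⟨T, hTdef⟩ : ∃ T : ℕ → ℝ,
      T = fun i => ∑ n ∈ Finset.Ico 2 ℓ, bc (L i) n * x^n := ⟨_, rfl⟩
  have hT : ∀ i, T i = ∑ n ∈ Finset.Ico 2 ℓ, bc (L i) n * x^n := by intro i; rw [hTdef]
  -- nonvanishing facts
  have hLi0 : ∀ i ∈ Finset.Icc 2 ℓ, L i ≠ 0 := by
    intro i hi h; exact hint i hi 0 (by rw [h]; norm_num)
  have hLi1 : ∀ i ∈ Finset.Icc 2 ℓ, L i - 1 ≠ 0 := by
    intro i hi h; exact hint i hi 1 (by push_cast; linarith)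
  -- the binomial series for each i
  have hSer : ∀ i ∈ Finset.Icc 2 ℓ, HasSum (fun n : ℕ => bc (L i) n * x ^ n) (E i) := by
    intro i hi
    have h := binom_hasSum (hint i hi) hx0 hx1
    have hrw : (1 - x) ^ (L i) = E i := by
      rw [hxe, Real.rpow_def_of_pos (Real.exp_pos _), Real.log_exp, hE]
      congr 1
      ring
    rwa [hrw] at h
  have hShift : ∀ i ∈ Finset.Icc 2 ℓ,
      HasSum (fun m : ℕ => bc (L i) (m+ℓ) * x^(m+ℓ))
        (E i - ∑ n ∈ Finset.range ℓ, bc (L i) n * x^n) := by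
    intro i hi
    rw [hasSum_nat_add_iff (f := fun n : ℕ => bc (L i) n * x^n) ℓ, sub_add_cancel]
    exact hSer i hi
  have H : HasSum (fun m : ℕ => ∑ i ∈ Finset.Icc 2 ℓ, K i * (bc (L i) (m+ℓ) * x^(m+ℓ)))
      (∑ i ∈ Finset.Icc 2 ℓ, K i * (E i - ∑ n ∈ Finset.range ℓ, bc (L i) n * x^n)) :=
    hasSum_sum fun i hi => ((hShift i hi).mul_left (K i))
  -- identify the LHS termwise
  have hfun : ∀ m : ℕ,
      x ^ (m + ℓ) * (-1 : ℝ) ^ ℓ * (1 / ((m + ℓ).factorial : ℝ)) * P *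
          (∑ i ∈ Finset.Icc 2 ℓ,
            Real.Gamma (((m : ℝ) + ℓ) - L i) / Real.Gamma (2 - L i) *
              ∏ j ∈ (Finset.Icc 2 ℓ).erase i, 1 / (L i - L j))
        = ∑ i ∈ Finset.Icc 2 ℓ, K i * (bc (L i) (m+ℓ) * x^(m+ℓ)) := by
    intro m
    rw [Finset.mul_sum]
    refine Finset.sum_congr rfl fun i hi => ?_
    have h2 : 2 ≤ m + ℓ := by omega
    have hcast : (((m+ℓ:ℕ)):ℝ) = (m:ℝ) + ℓ := by push_cast; ring
    rw [bc_eq_gamma (hint i hi) h2, hcast, hK i, hCi i]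
    simp only [one_div]
    exact alg1 _ _ _ _ _ _ _ _ (hLi0 i hi) (hLi1 i hi) (gamma2_ne_zero (hint i hi))
      (Nat.cast_ne_zero.2 (m+ℓ).factorial_ne_zero)
  have hLHS : (∑' m : ℕ,
      x ^ (m + ℓ) * (-1 : ℝ) ^ ℓ * (1 / ((m + ℓ).factorial : ℝ)) * P *
          (∑ i ∈ Finset.Icc 2 ℓ,
            Real.Gamma (((m : ℝ) + ℓ) - L i) / Real.Gamma (2 - L i) *
              ∏ j ∈ (Finset.Icc 2 ℓ).erase i, 1 / (L i - L j)))
      = ∑ i ∈ Finset.Icc 2 ℓ, K i * (E i - ∑ n ∈ Finset.range ℓ, bc (L i) n * x^n) := by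
    rw [tsum_congr hfun]
    exact H.tsum_eq
  rw [hLHS]
  -- decompose the partial sums
  have hSrange : ∀ i ∈ Finset.Icc 2 ℓ,
      ∑ n ∈ Finset.range ℓ, bc (L i) n * x^n = 1 - L i * x + T i := by
    intro i hi
    rw [← Finset.sum_range_add_sum_Ico _ hℓ]
    have h02 : ∑ n ∈ Finset.range 2, bc (L i) n * x^n = 1 - L i * x := by
      simp [Finset.sum_range_succ, bc_zero, bc_one]
      ring
    rw [h02, hT]
  -- vanishing of the middle terms
  have hT0 : ∑ i ∈ Finset.Icc 2 ℓ, K i * T i = 0 := by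
    have hTs : ∀ i ∈ Finset.Icc 2 ℓ,
        K i * T i = ∑ n ∈ Finset.Ico 2 ℓ, K i * (bc (L i) n * x^n) := by
      intro i hi; rw [hT, Finset.mul_sum]
    rw [Finset.sum_congr rfl hTs, Finset.sum_comm]
    refine Finset.sum_eq_zero fun n hn => ?_
    have hn2 : 2 ≤ n := (Finset.mem_Ico.1 hn).1
    have hnl : n < ℓ := (Finset.mem_Ico.1 hn).2
    obtain ⟨p, hpdef⟩ : ∃ p : Polynomial ℝ,
        p = Lagrange.nodal (Finset.Ico 2 n) (fun k : ℕ => (k:ℝ)) := ⟨_, rfl⟩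
    have hdegp : p.degree = ((n - 2 : ℕ) : WithBot ℕ) := by
      rw [hpdef, Lagrange.degree_nodal, Nat.card_Ico]
    have hdeg : p.degree < (Finset.Icc 2 ℓ).card := by
      rw [hdegp, hcard2]
      exact_mod_cast (show n - 2 < ℓ - 1 by omega)
    have hco := lag_coeff hinj2 p hdeg
    have hco0 : p.coeff ((Finset.Icc 2 ℓ).card - 1) = 0 := by
      refine Polynomial.coeff_eq_zero_of_degree_lt ?_
      rw [hdegp, hcard2]
      exact_mod_cast (show n - 2 < ℓ - 1 - 1 by omega)
    have hsum0 : ∑ i ∈ Finset.Icc 2 ℓ, p.eval (L i) * Ci i = 0 := by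
      rw [← hco0, hco]
      exact Finset.sum_congr rfl fun i hi => by rw [hCi i]
    have hper : ∀ i ∈ Finset.Icc 2 ℓ, K i * (bc (L i) n * x^n)
        = ((-1:ℝ)^ℓ * P * x^n * (-1:ℝ)^(n-2) / n.factorial) * (p.eval (L i) * Ci i) := by
      intro i hi
      have heval : p.eval (L i) = ∏ k ∈ Finset.Ico 2 n, (L i - (k:ℝ)) := by
        rw [hpdef, Lagrange.eval_nodal]
      have hflip : (∏ k ∈ Finset.Ico 2 n, ((k:ℝ) - L i))
          = (-1:ℝ)^(n-2) * ∏ k ∈ Finset.Ico 2 n, (L i - (k:ℝ)) := by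
        rw [← Nat.card_Ico 2 n, ← Finset.prod_const (-1:ℝ), ← Finset.prod_mul_distrib]
        exact Finset.prod_congr rfl fun k _ => by ring
      rw [bc_eq_prod hn2, hflip, ← heval, hK i]
      exact alg2 _ _ _ _ _ _ _ _ (hLi0 i hi) (hLi1 i hi)
        (Nat.cast_ne_zero.2 n.factorial_ne_zero)
    calc ∑ i ∈ Finset.Icc 2 ℓ, K i * (bc (L i) n * x^n)
        = ∑ i ∈ Finset.Icc 2 ℓ,
            ((-1:ℝ)^ℓ * P * x^n * (-1:ℝ)^(n-2) / n.factorial) * (p.eval (L i) * Ci i) :=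
          Finset.sum_congr rfl hper
      _ = ((-1:ℝ)^ℓ * P * x^n * (-1:ℝ)^(n-2) / n.factorial)
            * ∑ i ∈ Finset.Icc 2 ℓ, p.eval (L i) * Ci i := by rw [Finset.mul_sum]
      _ = 0 := by rw [hsum0, mul_zero]
  -- K in terms of the full product
  have hKP : ∀ i ∈ Finset.Icc 2 ℓ, K i = (-1:ℝ)^ℓ * Pf i := by
    intro i hi
    have hi2 : 2 ≤ i ∧ i ≤ ℓ := Finset.mem_Icc.1 hi
    have herase : (Finset.Icc 1 ℓ).erase i = insert 1 ((Finset.Icc 2 ℓ).erase i) := by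
      ext j
      simp only [Finset.mem_erase, Finset.mem_Icc, Finset.mem_insert]
      omega
    have h1ni : (1:ℕ) ∉ (Finset.Icc 2 ℓ).erase i := by simp
    have hprodLe : (∏ j ∈ (Finset.Icc 2 ℓ).erase i, L j) * L i = P := by
      rw [hPdef]; exact Finset.prod_erase_mul _ _ hi
    have hP' : (∏ j ∈ (Finset.Icc 2 ℓ).erase i, L j) = P / L i := by
      rw [eq_div_iff (hLi0 i hi)]; exact hprodLe
    have hdiv : ∏ j ∈ (Finset.Icc 2 ℓ).erase i, (L j / (L i - L j))
        = (P / L i) * Ci i := by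
      rw [hCi i, ← hP', ← Finset.prod_mul_distrib]
      exact Finset.prod_congr rfl fun j _ => div_eq_mul_inv _ _
    have hPfi : Pf i = 1 / (L i - 1) * ((P / L i) * Ci i) := by
      rw [hPff i, herase, Finset.prod_insert h1ni, hdiv, hL1]
    rw [hPfi, hK i]
    exact alg3 _ _ _ _ (hLi0 i hi) (hLi1 i hi)
  -- Lagrange identities on the full node set
  have hflipPf : ∀ i ∈ Finset.Icc 1 ℓ,
      ∏ j ∈ (Finset.Icc 1 ℓ).erase i, ((0 - L j)/(L i - L j)) = (-1:ℝ)^(ℓ-1) * Pf i := by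
    intro i hi
    have hcard : ((Finset.Icc 1 ℓ).erase i).card = ℓ - 1 := by
      rw [Finset.card_erase_of_mem hi, hcard1]
    rw [hPff i, ← hcard, ← Finset.prod_const (-1:ℝ), ← Finset.prod_mul_distrib]
    refine Finset.prod_congr rfl fun j _ => ?_
    rw [zero_sub, neg_div, neg_one_mul]
  have hdeg1 : (1 : Polynomial ℝ).degree < (Finset.Icc 1 ℓ).card := by
    rw [Polynomial.degree_one, hcard1]
    exact_mod_cast (show (0:ℕ) < ℓ by omega)
  have hdegX : (Polynomial.X : Polynomial ℝ).degree < (Finset.Icc 1 ℓ).card := by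
    rw [Polynomial.degree_X, hcard1]
    exact_mod_cast (show (1:ℕ) < ℓ by omega)
  have hone := lag_eval hinj (1 : Polynomial ℝ) hdeg1 0
  have hXe := lag_eval hinj (Polynomial.X : Polynomial ℝ) hdegX 0
  simp only [Polynomial.eval_one, one_mul, Polynomial.eval_X] at hone hXe
  rw [Finset.sum_congr rfl hflipPf] at hone
  have hXe' : (0:ℝ) = ∑ i ∈ Finset.Icc 1 ℓ, L i * ((-1:ℝ)^(ℓ-1) * Pf i) := by
    rw [hXe]
    exact Finset.sum_congr rfl fun i hi => by rw [hflipPf i hi]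
  have hsq : (-1:ℝ)^(ℓ-1) * (-1:ℝ)^(ℓ-1) = 1 := by
    rw [← pow_add]
    exact Even.neg_one_pow ⟨ℓ-1, rfl⟩
  have hsum1 : ∑ i ∈ Finset.Icc 1 ℓ, Pf i = (-1:ℝ)^(ℓ-1) := by
    have h2 : (1:ℝ) = (-1:ℝ)^(ℓ-1) * ∑ i ∈ Finset.Icc 1 ℓ, Pf i := by
      rw [Finset.mul_sum]; exact hone
    calc ∑ i ∈ Finset.Icc 1 ℓ, Pf i
        = ((-1:ℝ)^(ℓ-1) * (-1:ℝ)^(ℓ-1)) * ∑ i ∈ Finset.Icc 1 ℓ, Pf i := by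
          rw [hsq, one_mul]
      _ = (-1:ℝ)^(ℓ-1) * ((-1:ℝ)^(ℓ-1) * ∑ i ∈ Finset.Icc 1 ℓ, Pf i) := by ring
      _ = (-1:ℝ)^(ℓ-1) := by rw [← h2, mul_one]
  have hsumL : ∑ i ∈ Finset.Icc 1 ℓ, L i * Pf i = 0 := by
    have h2 : (0:ℝ) = (-1:ℝ)^(ℓ-1) * ∑ i ∈ Finset.Icc 1 ℓ, L i * Pf i := by
      rw [Finset.mul_sum]
      exact hXe'.trans (Finset.sum_congr rfl fun i _ => by ring)
    have hne : (-1:ℝ)^(ℓ-1) ≠ 0 := by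
      intro h; rw [h] at hsq; norm_num at hsq
    rcases mul_eq_zero.1 h2.symm with h | h
    · exact absurd h hne
    · exact h
  -- split off the i = 1 term
  have hsum1' : Pf 1 + ∑ i ∈ Finset.Icc 2 ℓ, Pf i = (-1:ℝ)^(ℓ-1) := by
    rw [← hsum1, hins, Finset.sum_insert h1notin]
  have hsumL' : Pf 1 + ∑ i ∈ Finset.Icc 2 ℓ, L i * Pf i = 0 := by
    rw [← hsumL, hins, Finset.sum_insert h1notin, hL1, one_mul]
  have hA : ∑ i ∈ Finset.Icc 2 ℓ, Pf i = (-1:ℝ)^(ℓ-1) - Pf 1 := by linarith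
  have hB : ∑ i ∈ Finset.Icc 2 ℓ, L i * Pf i = -Pf 1 := by linarith
  -- rewrite the RHS
  have hexp : ∀ i, Real.exp (-(L i) * t) = E i := by
    intro i; rw [hE]; congr 1; ring
  have hRHS : ∑ i ∈ Finset.Icc 1 ℓ, Real.exp (-(L i) * t) *
        ∏ j ∈ (Finset.Icc 1 ℓ).erase i, L j / (L i - L j)
      = (1 - x) * Pf 1 + ∑ i ∈ Finset.Icc 2 ℓ, E i * Pf i := by
    have hterm : ∀ i ∈ Finset.Icc 1 ℓ, Real.exp (-(L i) * t) *
        ∏ j ∈ (Finset.Icc 1 ℓ).erase i, L j / (L i - L j) = E i * Pf i := by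
      intro i hi
      rw [hexp i, hPff i]
    rw [Finset.sum_congr rfl hterm, hins, Finset.sum_insert h1notin]
    congr 1
    rw [hE 1, hL1, one_mul, ← hxe]
  rw [hRHS]
  -- final algebra
  have hsplit : ∀ i ∈ Finset.Icc 2 ℓ,
      K i * (E i - ∑ n ∈ Finset.range ℓ, bc (L i) n * x^n)
        = K i * E i - K i + x * (K i * L i) - K i * T i := by
    intro i hi
    rw [hSrange i hi]
    ring
  rw [Finset.sum_congr rfl hsplit]
  simp only [Finset.sum_sub_distrib, Finset.sum_add_distrib, ← Finset.mul_sum]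
  rw [hT0]
  have e1 : ∑ i ∈ Finset.Icc 2 ℓ, K i * E i
      = (-1:ℝ)^ℓ * ∑ i ∈ Finset.Icc 2 ℓ, E i * Pf i := by
    rw [Finset.mul_sum]
    exact Finset.sum_congr rfl fun i hi => by rw [hKP i hi]; ring
  have e2 : ∑ i ∈ Finset.Icc 2 ℓ, K i = (-1:ℝ)^ℓ * ((-1:ℝ)^(ℓ-1) - Pf 1) := by
    rw [Finset.sum_congr rfl hKP, ← Finset.mul_sum, hA]
  have e3 : ∑ i ∈ Finset.Icc 2 ℓ, K i * L i = (-1:ℝ)^ℓ * (-Pf 1) := by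
    have : ∀ i ∈ Finset.Icc 2 ℓ, K i * L i = (-1:ℝ)^ℓ * (L i * Pf i) := by
      intro i hi; rw [hKP i hi]; ring
    rw [Finset.sum_congr rfl this, ← Finset.mul_sum, hB]
  rw [e1, e2, e3]
  have hsign : (-1:ℝ)^ℓ * (-1:ℝ)^(ℓ-1) = -1 := by
    rw [← pow_add]
    exact Odd.neg_one_pow ⟨ℓ-1, by omega⟩
  linear_combination -hsign
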